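/- Let P* ≻ 0 satisfy the Lyapunov-type identity P* = Ãᵀ P* Ã + S with S ≻ 0, and let V(χ) = χᵀ P* χ. Suppose a sequence χ_{t+1} = Ã_t χ_t + d_t with ‖Ã_tᵀP*Ã_t − ÃᵀP*Ã‖ ≤ L₁ρᵗ and ‖d_t‖ ≤ L₂ρᵗ for constants L₁, L₂ > 0, 0 < ρ < 1. Then there exist constants L₄ > 0 and ρ̄ ∈ (0,1) such that ‖χ_t‖ ≤ L₄ ρ̄ᵗ for all sufficiently large t. -/

import Mathlib

open Matrix Filter Topology

attribute [local instance] Matrix.normedAddCommGroup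

namespace Stmt16Aux

variable {n : ℕ}

/-- Euclidean norm on plain vectors. -/
noncomputable def N (u : Fin n → ℝ) : ℝ := ‖(WithLp.equiv 2 (Fin n → ℝ)).symm u‖

lemma N_nonneg (u : Fin n → ℝ) : 0 ≤ N u := norm_nonneg _

lemma N_add_le (u v : Fin n → ℝ) : N (u + v) ≤ N u + N v := by
  unfold N
  rw [WithLp.equiv_symm_apply, WithLp.toLp_add]
  exact norm_add_le _ _

lemma N_sq (u : Fin n → ℝ) : N u ^ 2 = u ⬝ᵥ u := by
  unfold N
  rw [EuclideanSpace.norm_eq]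
  rw [Real.sq_sqrt (by positivity)]
  simp [dotProduct, WithLp.equiv_symm_apply, Real.norm_eq_abs, sq_abs, pow_two]

lemma pi_norm_le_N (u : Fin n → ℝ) : ‖u‖ ≤ N u := by
  rw [pi_norm_le_iff_of_nonneg (N_nonneg u)]
  intro i
  have h1 : ‖u i‖ ^ 2 ≤ N u ^ 2 := by
    rw [N_sq]
    have : u i ^ 2 ≤ ∑ j, u j * u j := by
      have h := Finset.single_le_sum (f := fun j => u j * u j)
        (fun j _ => mul_self_nonneg (u j)) (Finset.mem_univ i)
      simpa [pow_two] using h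
    simpa [Real.norm_eq_abs, sq_abs, dotProduct] using this
  have := Real.sqrt_le_sqrt h1
  rwa [Real.sqrt_sq (norm_nonneg _), Real.sqrt_sq (N_nonneg u)] at this

lemma abs_dot_le (u v : Fin n → ℝ) : |u ⬝ᵥ v| ≤ n * ‖u‖ * ‖v‖ := by
  calc |u ⬝ᵥ v| ≤ ∑ i, |u i * v i| := Finset.abs_sum_le_sum_abs _ _
    _ ≤ ∑ _i : Fin n, ‖u‖ * ‖v‖ := by
        refine Finset.sum_le_sum fun i _ => ?_
        rw [abs_mul]
        exact mul_le_mul (norm_le_pi_norm u i) (norm_le_pi_norm v i)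
          (abs_nonneg _) (norm_nonneg _)
    _ = n * ‖u‖ * ‖v‖ := by simp [mul_assoc]

lemma mulVec_norm_le (M : Matrix (Fin n) (Fin n) ℝ) (x : Fin n → ℝ) :
    ‖M *ᵥ x‖ ≤ n * ‖M‖ * ‖x‖ := by
  rw [pi_norm_le_iff_of_nonneg (by positivity)]
  intro i
  calc ‖(M *ᵥ x) i‖ = |∑ j, M i j * x j| := by simp [Matrix.mulVec, dotProduct]
    _ ≤ ∑ j, |M i j * x j| := Finset.abs_sum_le_sum_abs _ _
    _ ≤ ∑ _j : Fin n, ‖M‖ * ‖x‖ := by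
        refine Finset.sum_le_sum fun j _ => ?_
        rw [abs_mul]
        exact mul_le_mul (M.norm_entry_le_entrywise_sup_norm) (norm_le_pi_norm x j)
          (abs_nonneg _) (norm_nonneg _)
    _ = n * (‖M‖ * ‖x‖) := by simp
    _ = n * ‖M‖ * ‖x‖ := by ring

lemma dot_mulVec_le (M : Matrix (Fin n) (Fin n) ℝ) (x : Fin n → ℝ) :
    x ⬝ᵥ (M *ᵥ x) ≤ (n : ℝ) ^ 2 * ‖M‖ * ‖x‖ ^ 2 := by
  calc x ⬝ᵥ (M *ᵥ x) ≤ |x ⬝ᵥ (M *ᵥ x)| := le_abs_self _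
    _ ≤ n * ‖x‖ * ‖M *ᵥ x‖ := abs_dot_le _ _
    _ ≤ n * ‖x‖ * (n * ‖M‖ * ‖x‖) := by
        refine mul_le_mul_of_nonneg_left (mulVec_norm_le M x) (by positivity)
    _ = (n : ℝ) ^ 2 * ‖M‖ * ‖x‖ ^ 2 := by ring

lemma quad_eq (A M : Matrix (Fin n) (Fin n) ℝ) (x : Fin n → ℝ) :
    (A *ᵥ x) ⬝ᵥ (M *ᵥ (A *ᵥ x)) = x ⬝ᵥ ((Aᵀ * M * A) *ᵥ x) := by
  rw [Matrix.dotProduct_mulVec, Matrix.dotProduct_mulVec]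
  rw [← Matrix.vecMul_transpose A x, Matrix.vecMul_vecMul, Matrix.vecMul_vecMul]
  rw [Matrix.mul_assoc]
  exact (Matrix.dotProduct_mulVec x _ x).symm

lemma W_sq {Q P : Matrix (Fin n) (Fin n) ℝ} (hsym : Qᵀ = Q) (hmul : Q * Q = P)
    (x : Fin n → ℝ) : N (Q *ᵥ x) ^ 2 = x ⬝ᵥ (P *ᵥ x) := by
  rw [N_sq, Matrix.dotProduct_mulVec, ← Matrix.vecMul_transpose Q x,
    Matrix.vecMul_vecMul, hsym, hmul]
  exact (Matrix.dotProduct_mulVec x _ x).symm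

lemma lower {Q : Matrix (Fin n) (Fin n) ℝ} (hdet : IsUnit Q.det) :
    ∃ c : ℝ, 0 < c ∧ ∀ x : Fin n → ℝ, ‖x‖ ≤ c * N (Q *ᵥ x) := by
  refine ⟨n * ‖Q⁻¹‖ + 1, by positivity, fun x => ?_⟩
  have hx : x = Q⁻¹ *ᵥ (Q *ᵥ x) := by
    rw [Matrix.mulVec_mulVec, Matrix.nonsing_inv_mul Q hdet, Matrix.one_mulVec]
  calc ‖x‖ = ‖Q⁻¹ *ᵥ (Q *ᵥ x)‖ := by rw [← hx]
    _ ≤ n * ‖Q⁻¹‖ * ‖Q *ᵥ x‖ := mulVec_norm_le _ _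
    _ ≤ n * ‖Q⁻¹‖ * N (Q *ᵥ x) := by
        refine mul_le_mul_of_nonneg_left (pi_norm_le_N _) (by positivity)
    _ ≤ (n * ‖Q⁻¹‖ + 1) * N (Q *ᵥ x) := by
        have := N_nonneg (Q *ᵥ x)
        nlinarith

open scoped MatrixOrder in
/-- Extract a symmetric square root with invertible determinant from a PosDef matrix. -/
lemma exists_sqrt {P : Matrix (Fin n) (Fin n) ℝ} (hP : P.PosDef) :
    ∃ Q : Matrix (Fin n) (Fin n) ℝ, Qᵀ = Q ∧ Q * Q = P ∧ IsUnit Q.det := by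
  refine ⟨CFC.sqrt P, ?_, CFC.sqrt_mul_sqrt_self P hP.posSemidef.nonneg, ?_⟩
  · have h := (CFC.sqrt_nonneg P).posSemidef.1
    rwa [Matrix.IsHermitian, Matrix.conjTranspose_eq_transpose_of_trivial] at h
  · have h2 : (CFC.sqrt P).det * (CFC.sqrt P).det = P.det := by
      rw [← Matrix.det_mul, CFC.sqrt_mul_sqrt_self P hP.posSemidef.nonneg]
    have h3 : P.det ≠ 0 := ne_of_gt hP.det_pos
    have h4 : (CFC.sqrt P).det ≠ 0 := fun h => h3 (by rw [← h2, h, mul_zero])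
    exact h4.isUnit

end Stmt16Aux

open Stmt16Aux

set_option maxHeartbeats 1600000 in
theorem stmt16 {n : ℕ}
    (Atil : Matrix (Fin n) (Fin n) ℝ) (Pstar S : Matrix (Fin n) (Fin n) ℝ)
    (hP : Pstar.PosDef) (hS : S.PosDef)
    (hLyap : Pstar = Atilᵀ * Pstar * Atil + S)
    (At : ℕ → Matrix (Fin n) (Fin n) ℝ)
    (χ : ℕ → Fin n → ℝ) (d : ℕ → Fin n → ℝ)
    (hrec : ∀ t, χ (t + 1) = (At t) *ᵥ χ t + d t)
    (L₁ L₂ ρ : ℝ) (hL₁ : 0 < L₁) (hL₂ : 0 < L₂) (hρ0 : 0 < ρ) (hρ1 : ρ < 1)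
    (hAt : ∀ t, ‖(At t)ᵀ * Pstar * At t - Atilᵀ * Pstar * Atil‖ ≤ L₁ * ρ ^ t)
    (hd : ∀ t, ‖d t‖ ≤ L₂ * ρ ^ t) :
    ∃ (L₄ ρbar : ℝ) (T : ℕ), 0 < L₄ ∧ 0 < ρbar ∧ ρbar < 1 ∧
      ∀ t ≥ T, ‖χ t‖ ≤ L₄ * ρbar ^ t := by
  obtain ⟨Q, hQsym, hQmul, hQdet⟩ := exists_sqrt hP
  obtain ⟨QS, hQSsym, hQSmul, hQSdet⟩ := exists_sqrt hS
  obtain ⟨cP, hcP, hlowP⟩ := lower hQdet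
  obtain ⟨cS, hcS, hlowS⟩ := lower hQSdet
  set W : (Fin n → ℝ) → ℝ := fun x => N (Q *ᵥ x) with hWdef
  have hWnn : ∀ x, 0 ≤ W x := fun x => N_nonneg _
  have hWsq : ∀ x, W x ^ 2 = x ⬝ᵥ (Pstar *ᵥ x) := fun x => W_sq hQsym hQmul x
  have hPnn : ∀ x, 0 ≤ x ⬝ᵥ (Pstar *ᵥ x) := fun x => by
    rw [← hWsq]; positivity
  set CP : ℝ := (n : ℝ) ^ 2 * ‖Pstar‖ + 1 with hCPdef
  have hCP0 : 0 < CP := by positivity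
  have hup : ∀ x, x ⬝ᵥ (Pstar *ᵥ x) ≤ CP * ‖x‖ ^ 2 := by
    intro x
    have h := dot_mulVec_le Pstar x
    nlinarith [sq_nonneg ‖x‖]
  have hlowP' : ∀ x, ‖x‖ ^ 2 ≤ cP ^ 2 * W x ^ 2 := by
    intro x
    have h := hlowP x
    nlinarith [norm_nonneg x, hWnn x]
  have hSlow : ∀ x, ‖x‖ ^ 2 ≤ cS ^ 2 * (x ⬝ᵥ (S *ᵥ x)) := by
    intro x
    have h := hlowS x
    have h2 := W_sq hQSsym hQSmul x
    nlinarith [norm_nonneg x, N_nonneg (QS *ᵥ x)]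
  set θ : ℝ := 1 / (cS ^ 2 * CP) with hθdef
  have hθ0 : 0 < θ := by positivity
  have hθle : ∀ x, θ * (x ⬝ᵥ (Pstar *ᵥ x)) ≤ x ⬝ᵥ (S *ᵥ x) := by
    intro x
    have h1 := hup x
    have h2 := hSlow x
    have hcc : (0 : ℝ) < cS ^ 2 * CP := by positivity
    rw [hθdef, div_mul_eq_mul_div, one_mul, div_le_iff₀ hcc]
    nlinarith [mul_le_mul_of_nonneg_left h2 hCP0.le]
  set c0 : ℝ := max 0 (1 - θ) with hc0def
  have hc00 : 0 ≤ c0 := le_max_left _ _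
  have hc01 : c0 < 1 := max_lt one_pos (by linarith)
  have hkey : ∀ x, x ⬝ᵥ ((Pstar - S) *ᵥ x) ≤ c0 * (x ⬝ᵥ (Pstar *ᵥ x)) := by
    intro x
    rw [Matrix.sub_mulVec, dotProduct_sub]
    have h1 := hθle x
    have h2 : (1 - θ) ≤ c0 := le_max_right _ _
    have h3 := hPnn x
    nlinarith
  have hLyap' : Atilᵀ * Pstar * Atil = Pstar - S := by
    rw [eq_sub_iff_add_eq]; exact hLyap.symm
  have hdecomp : ∀ t, (At t)ᵀ * Pstar * (At t) =
      (Pstar - S) + ((At t)ᵀ * Pstar * (At t) - Atilᵀ * Pstar * Atil) := by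
    intro t
    rw [hLyap']
    abel
  set K : ℝ := (n : ℝ) ^ 2 * L₁ * cP ^ 2 with hKdef
  have hK0 : 0 ≤ K := by positivity
  have hquad : ∀ t (x : Fin n → ℝ),
      W (At t *ᵥ x) ^ 2 ≤ (c0 + K * ρ ^ t) * W x ^ 2 := by
    intro t x
    have e1 : W (At t *ᵥ x) ^ 2 = x ⬝ᵥ (((At t)ᵀ * Pstar * At t) *ᵥ x) := by
      rw [hWsq]
      exact quad_eq _ _ _
    have e2 : W (At t *ᵥ x) ^ 2 = x ⬝ᵥ ((Pstar - S) *ᵥ x) +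
        x ⬝ᵥ (((At t)ᵀ * Pstar * (At t) - Atilᵀ * Pstar * Atil) *ᵥ x) := by
      refine (e1.trans ?_)
      have hm : Pstar - S + ((At t)ᵀ * Pstar * At t - Atilᵀ * Pstar * Atil) =
          (At t)ᵀ * Pstar * At t := by
        rw [hLyap']; abel
      rw [← dotProduct_add, ← Matrix.add_mulVec, hm]
    have e3 : x ⬝ᵥ (((At t)ᵀ * Pstar * (At t) - Atilᵀ * Pstar * Atil) *ᵥ x) ≤
        (n : ℝ) ^ 2 * (L₁ * ρ ^ t) * ‖x‖ ^ 2 := by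
      have h := dot_mulVec_le ((At t)ᵀ * Pstar * (At t) - Atilᵀ * Pstar * Atil) x
      have h2 := hAt t
      nlinarith [h, sq_nonneg ‖x‖,
        mul_le_mul_of_nonneg_left h2 (by positivity : (0:ℝ) ≤ (n : ℝ) ^ 2 * ‖x‖ ^ 2)]
    have e4 := hlowP' x
    have e5 := hkey x
    have e6 := hWsq x
    have hρt : (0 : ℝ) ≤ ρ ^ t := by positivity
    have e7 : (n : ℝ) ^ 2 * (L₁ * ρ ^ t) * ‖x‖ ^ 2 ≤
        (n : ℝ) ^ 2 * (L₁ * ρ ^ t) * (cP ^ 2 * W x ^ 2) := by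
      refine mul_le_mul_of_nonneg_left e4 (by positivity)
    rw [e2, hKdef]
    nlinarith
  set r : ℝ := Real.sqrt ((1 + c0) / 2) with hrdef
  have hr2 : r ^ 2 = (1 + c0) / 2 := Real.sq_sqrt (by linarith)
  have hr0 : 0 < r := Real.sqrt_pos.2 (by linarith)
  have hr1 : r < 1 := by nlinarith [sq_nonneg (r - 1)]
  have htend : Tendsto (fun t : ℕ => ρ ^ t) atTop (𝓝 0) :=
    tendsto_pow_atTop_nhds_zero_of_lt_one hρ0.le hρ1
  have hδ0 : (0 : ℝ) < ((1 - c0) / 2) / (K + 1) :=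
    div_pos (by linarith) (by linarith)
  obtain ⟨T, hT⟩ := eventually_atTop.1 (htend.eventually (gt_mem_nhds hδ0))
  have hcontr : ∀ t, T ≤ t → ∀ x, W (At t *ᵥ x) ≤ r * W x := by
    intro t ht x
    have h1 := hquad t x
    have h2 : c0 + K * ρ ^ t ≤ r ^ 2 := by
      have h3 := hT t ht
      have hρt : (0 : ℝ) ≤ ρ ^ t := by positivity
      have h4 : K * ρ ^ t ≤ (K + 1) * (((1 - c0) / 2) / (K + 1)) := by
        refine mul_le_mul (by linarith) (le_of_lt h3) hρt (by linarith)
      have h5 : (K + 1) * (((1 - c0) / 2) / (K + 1)) = (1 - c0) / 2 := by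
        field_simp
      rw [hr2]
      linarith
    have h5 : W (At t *ᵥ x) ^ 2 ≤ (r * W x) ^ 2 := by
      have h6 := mul_le_mul_of_nonneg_right h2 (sq_nonneg (W x))
      calc W (At t *ᵥ x) ^ 2 ≤ (c0 + K * ρ ^ t) * W x ^ 2 := h1
        _ ≤ r ^ 2 * W x ^ 2 := h6
        _ = (r * W x) ^ 2 := by ring
    calc W (At t *ᵥ x) = Real.sqrt (W (At t *ᵥ x) ^ 2) :=
          (Real.sqrt_sq (hWnn _)).symm
      _ ≤ Real.sqrt ((r * W x) ^ 2) := Real.sqrt_le_sqrt h5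
      _ = r * W x := Real.sqrt_sq (mul_nonneg hr0.le (hWnn x))
  have hWup : ∀ x : Fin n → ℝ, W x ≤ Real.sqrt CP * ‖x‖ := by
    intro x
    have h1 : W x ^ 2 ≤ (Real.sqrt CP * ‖x‖) ^ 2 := by
      rw [mul_pow, Real.sq_sqrt hCP0.le, hWsq]
      exact hup x
    calc W x = Real.sqrt (W x ^ 2) := (Real.sqrt_sq (hWnn x)).symm
      _ ≤ Real.sqrt ((Real.sqrt CP * ‖x‖) ^ 2) := Real.sqrt_le_sqrt h1
      _ = Real.sqrt CP * ‖x‖ :=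
          Real.sqrt_sq (mul_nonneg (Real.sqrt_nonneg _) (norm_nonneg _))
  set D : ℝ := Real.sqrt CP * L₂ with hDdef
  have hD0 : 0 ≤ D := by positivity
  have hWd : ∀ t, W (d t) ≤ D * ρ ^ t := by
    intro t
    calc W (d t) ≤ Real.sqrt CP * ‖d t‖ := hWup _
      _ ≤ Real.sqrt CP * (L₂ * ρ ^ t) :=
          mul_le_mul_of_nonneg_left (hd t) (Real.sqrt_nonneg _)
      _ = D * ρ ^ t := by rw [hDdef]; ring
  have hWtri : ∀ u v : Fin n → ℝ, W (u + v) ≤ W u + W v := by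
    intro u v
    show N (Q *ᵥ (u + v)) ≤ N (Q *ᵥ u) + N (Q *ᵥ v)
    rw [Matrix.mulVec_add]
    exact N_add_le _ _
  set m0 : ℝ := max r ρ with hm0def
  set ρbar : ℝ := (1 + m0) / 2 with hρbardef
  have hm01 : m0 < 1 := max_lt hr1 hρ1
  have hm00 : 0 < m0 := lt_of_lt_of_le hr0 (le_max_left _ _)
  have hρb0 : 0 < ρbar := by rw [hρbardef]; linarith
  have hρb1 : ρbar < 1 := by rw [hρbardef]; linarith
  have hrρb : r < ρbar := by
    have h := le_max_left r ρ
    rw [hρbardef]; rw [hm0def] at *; linarith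
  have hρρb : ρ ≤ ρbar := by
    have h := le_max_right r ρ
    rw [hρbardef]; rw [hm0def] at *; linarith
  set M : ℝ := max (W (χ T) / ρbar ^ T) (D / (ρbar - r)) with hMdef
  have hρbT : (0 : ℝ) < ρbar ^ T := by positivity
  have hM0 : 0 ≤ M := by
    exact le_trans (div_nonneg (hWnn _) hρbT.le) (le_max_left _ _)
  have hind : ∀ t, T ≤ t → W (χ t) ≤ M * ρbar ^ t := by
    intro t ht
    induction t, ht using Nat.le_induction with
    | base =>
      have h1 : W (χ T) / ρbar ^ T ≤ M := le_max_left _ _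
      calc W (χ T) = (W (χ T) / ρbar ^ T) * ρbar ^ T := by field_simp
        _ ≤ M * ρbar ^ T := mul_le_mul_of_nonneg_right h1 hρbT.le
    | succ t ht IH =>
      have h1 : W (χ (t + 1)) ≤ r * W (χ t) + D * ρ ^ t := by
        rw [hrec t]
        calc W (At t *ᵥ χ t + d t) ≤ W (At t *ᵥ χ t) + W (d t) := hWtri _ _
          _ ≤ r * W (χ t) + D * ρ ^ t := add_le_add (hcontr t ht _) (hWd t)
      have h2 : D * ρ ^ t ≤ D * ρbar ^ t :=
        mul_le_mul_of_nonneg_left (pow_le_pow_left₀ hρ0.le hρρb t) hD0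
      have h3 : D ≤ M * (ρbar - r) := by
        have h := le_max_right (W (χ T) / ρbar ^ T) (D / (ρbar - r))
        rw [← hMdef] at h
        have h4 : 0 < ρbar - r := by linarith
        calc D = (D / (ρbar - r)) * (ρbar - r) := by field_simp
          _ ≤ M * (ρbar - r) := mul_le_mul_of_nonneg_right h h4.le
      have h4 : (0 : ℝ) ≤ ρbar ^ t := by positivity
      have h5 : r * W (χ t) ≤ r * (M * ρbar ^ t) :=
        mul_le_mul_of_nonneg_left IH hr0.le
      calc W (χ (t + 1)) ≤ r * W (χ t) + D * ρbar ^ t := by linarith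
        _ ≤ r * (M * ρbar ^ t) + D * ρbar ^ t := by linarith
        _ = (r * M + D) * ρbar ^ t := by ring
        _ ≤ (ρbar * M) * ρbar ^ t := by nlinarith
        _ = M * ρbar ^ (t + 1) := by ring
  have hL40 : 0 < cP * M + 1 := by nlinarith
  refine ⟨cP * M + 1, ρbar, T, hL40, hρb0, hρb1, fun t ht => ?_⟩
  have h1 := hind t ht
  have h2 := hlowP (χ t)
  have h3 : (0 : ℝ) < ρbar ^ t := by positivity
  calc ‖χ t‖ ≤ cP * W (χ t) := h2
    _ ≤ cP * (M * ρbar ^ t) := mul_le_mul_of_nonneg_left h1 hcP.le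
    _ ≤ (cP * M + 1) * ρbar ^ t := by nlinarith
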